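/- If G is a 2-connected graph on n vertices, then md(G) ≤ ⌊n/2⌋. -/

import Mathlib

open SimpleGraph

variable {V : Type*}

/-- Color `i` separates `u` and `v`: there is an edge-cut, all of whose edges
have color `i`, whose removal disconnects `u` from `v`. -/
def separatesColor (G : SimpleGraph V) (Γ : Sym2 V → ℕ) (i : ℕ) (u v : V) : Prop :=
  ∃ F : Set (Sym2 V), F ⊆ G.edgeSet ∧ (∀ e ∈ F, Γ e = i) ∧
    ¬ ((G.deleteEdges F).Reachable u v)

/-- An MD-coloring: every pair of distinct vertices is separated by a
monochromatic edge-cut. -/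
def IsMDColoring (G : SimpleGraph V) (Γ : Sym2 V → ℕ) : Prop :=
  ∀ u v : V, u ≠ v → ∃ i, separatesColor G Γ i u v

/-- The monochromatic disconnection number: the maximum number of colors
used by an MD-coloring. -/
noncomputable def mdNumber (G : SimpleGraph V) : ℕ :=
  sSup {k | ∃ Γ : Sym2 V → ℕ, IsMDColoring G Γ ∧ (Γ '' G.edgeSet).ncard = k}

namespace MDaux

/-- Extract a G-walk from an induced-subgraph walk, with support control. -/
lemma walk_of_induce {G : SimpleGraph V} {s : Set V} :
    ∀ {a b : s}, ((G.induce s).Walk a b) →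
      ∃ p : G.Walk a.1 b.1, ∀ x ∈ p.support, x ∈ s := by
  intro a b w
  induction w with
  | nil => exact ⟨Walk.nil, by simp⟩
  | cons h q ih =>
      obtain ⟨p, hp⟩ := ih
      refine ⟨Walk.cons (by exact h) p, ?_⟩
      intro x hx
      rcases List.mem_cons.mp (show x ∈ _ :: p.support from hx) with rfl | hx'
      · exact Subtype.coe_prop _
      · exact hp _ hx'

/-- Prefix of a walk up to the first vertex belonging to `S`. -/
lemma exists_prefix_to_set {G : SimpleGraph V} {S : Set V} :
    ∀ {y t : V} (w : G.Walk y t), y ∉ S → t ∈ S →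
    ∃ z, z ∈ S ∧ ∃ q : G.Walk y z,
      (∀ x ∈ q.support, x ∈ w.support) ∧
      (∀ e ∈ q.edges, e ∈ w.edges) ∧
      (∀ x ∈ q.support, x ≠ z → x ∉ S) := by
  intro y t w
  induction w with
  | nil => intro hy ht; exact absurd ht hy
  | @cons y c t h q ih =>
      intro hy ht
      by_cases hc : c ∈ S
      · refine ⟨c, hc, Walk.cons h Walk.nil, ?_, ?_, ?_⟩
        · intro x hx; simp at hx ⊢
          rcases hx with rfl | rfl
          · left; rfl
          · right; exact q.start_mem_support
        · intro e he; simp at he ⊢; tauto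
        · intro x hx hxz; simp at hx; rcases hx with rfl | rfl
          · exact hy
          · exact absurd rfl hxz
      · obtain ⟨z, hz, q', hsup, hed, hS⟩ := ih hc ht
        refine ⟨z, hz, Walk.cons h q', ?_, ?_, ?_⟩
        · intro x hx; simp at hx ⊢
          rcases hx with rfl | hx'
          · left; rfl
          · right; exact hsup _ hx'
        · intro e he; simp at he ⊢
          rcases he with rfl | he'
          · left; rfl
          · right; exact hed _ he'
        · intro x hx hxz; simp at hx
          rcases hx with rfl | hx'
          · exact hy
          · exact hS _ hx' hxz

/-- A walk from outside `S` into `S` contains a crossing edge. -/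
lemma exists_crossing_edge {G : SimpleGraph V} {S : Set V} :
    ∀ {y t : V} (_ : G.Walk y t), y ∉ S → t ∈ S →
      ∃ a b, G.Adj a b ∧ a ∈ S ∧ b ∉ S := by
  intro y t w
  induction w with
  | nil => intro hy ht; exact absurd ht hy
  | @cons y c t h q ih =>
      intro hy ht
      by_cases hc : c ∈ S
      · exact ⟨c, y, h.symm, hc, hy⟩
      · exact ih hc ht

/-- Split a walk with nodup edges at an edge. -/
lemma split_at_edge {G : SimpleGraph V} :
    ∀ {u w : V} (p : G.Walk u w), p.edges.Nodup → ∀ {e : Sym2 V}, e ∈ p.edges →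
    ∃ a b, e = s(a, b) ∧ ∃ (r1 : G.Walk u a) (r2 : G.Walk b w),
      (∀ f ∈ r1.edges, f ∈ p.edges) ∧ (∀ f ∈ r2.edges, f ∈ p.edges) ∧
      e ∉ r1.edges ∧ e ∉ r2.edges := by
  intro u w p
  induction p with
  | nil => intro _ e he; simp at he
  | @cons u c w h q ih =>
      intro hnd e he
      rw [Walk.edges_cons] at he hnd
      rcases List.mem_cons.mp he with rfl | he'
      · refine ⟨u, c, rfl, Walk.nil, q, ?_, ?_, ?_, ?_⟩
        · intro f hf; simp at hf
        · intro f hf; simp [hf]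
        · simp
        · exact (List.nodup_cons.mp hnd).1
      · obtain ⟨a, b, rfl, r1, r2, h1, h2, h3, h4⟩ := ih (List.nodup_cons.mp hnd).2 he'
        refine ⟨a, b, rfl, Walk.cons h r1, r2, ?_, ?_, ?_, h4⟩
        · intro f hf; simp at hf
          rcases hf with rfl | hf'
          · simp
          · simp [h1 _ hf']
        · intro f hf; simp [h2 _ hf]
        · intro hcon
          rw [Walk.edges_cons] at hcon
          rcases List.mem_cons.mp hcon with hq | hq
          · rw [hq] at he'; exact (List.nodup_cons.mp hnd).1 he'
          · exact h3 hq


/-! ### Color classes and separation -/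

def cls (H : SimpleGraph V) (Γ : Sym2 V → ℕ) (i : ℕ) : Set (Sym2 V) :=
  {e | e ∈ H.edgeSet ∧ Γ e = i}

def SepHyp (S : Set V) (H : SimpleGraph V) (Γ : Sym2 V → ℕ) : Prop :=
  ∀ u ∈ S, ∀ v ∈ S, u ≠ v → ∃ i, ¬ (H.deleteEdges (cls H Γ i)).Reachable u v

lemma deleteCls_mono {H H' : SimpleGraph V} (h : H ≤ H') (Γ : Sym2 V → ℕ) (i : ℕ) :
    H.deleteEdges (cls H Γ i) ≤ H'.deleteEdges (cls H' Γ i) := by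
  intro a b hab
  rw [deleteEdges_adj] at hab ⊢
  refine ⟨h hab.1, fun hmem => hab.2 ⟨?_, hmem.2⟩⟩
  exact H.mem_edgeSet.mpr hab.1

lemma SepHyp.mono {S S' : Set V} {H H' : SimpleGraph V} {Γ : Sym2 V → ℕ}
    (hS : S ⊆ S') (hH : H ≤ H') (h : SepHyp S' H' Γ) : SepHyp S H Γ := by
  intro u hu v hv hne
  obtain ⟨i, hi⟩ := h u (hS hu) v (hS hv) hne
  exact ⟨i, fun hr => hi (hr.mono (deleteCls_mono hH Γ i))⟩

/-! ### Ear decompositions -/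

inductive EarDec : Set V → SimpleGraph V → Prop
  | base (v : V) (c : (⊤ : SimpleGraph V).Walk v v) (hc : c.IsCycle) :
      EarDec {x | x ∈ c.support} (fromEdgeSet {e | e ∈ c.edges})
  | ear (S : Set V) (H : SimpleGraph V) (u w : V) (p : (⊤ : SimpleGraph V).Walk u w)
      (hED : EarDec S H) (hu : u ∈ S) (hw : w ∈ S) (hne : u ≠ w) (hp : p.IsPath)
      (hint : ∀ x ∈ p.support, x ≠ u → x ≠ w → x ∉ S)
      (hnew : ∀ e ∈ p.edges, e ∉ H.edgeSet) :
      EarDec (S ∪ {x | x ∈ p.support}) (H ⊔ fromEdgeSet {e | e ∈ p.edges})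

lemma top_edges_not_diag {u w : V} (p : (⊤ : SimpleGraph V).Walk u w) :
    ∀ e ∈ p.edges, ¬ e.IsDiag := by
  intro e he
  have := p.edges_subset_edgeSet he
  rwa [edgeSet_top, Set.mem_compl_iff, Sym2.mem_diagSet] at this

lemma edgeSet_fromWalkEdges {u w : V} (p : (⊤ : SimpleGraph V).Walk u w) :
    (fromEdgeSet {e | e ∈ p.edges}).edgeSet = {e | e ∈ p.edges} := by
  rw [edgeSet_fromEdgeSet]
  ext e
  simp only [Set.mem_diff, Set.mem_setOf_eq]
  exact ⟨fun h => h.1, fun h => ⟨h, top_edges_not_diag p e h⟩⟩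

lemma mem_of_mem_edge {G : SimpleGraph V} {u w x : V} (p : G.Walk u w) {e : Sym2 V}
    (he : e ∈ p.edges) (hx : x ∈ e) : x ∈ p.support := by
  induction e with
  | _ a b =>
    rcases Sym2.mem_iff.mp hx with rfl | rfl
    · exact p.fst_mem_support_of_mem_edges he
    · exact p.snd_mem_support_of_mem_edges he

lemma EarDec.verts_mem {S : Set V} {H : SimpleGraph V} (h : EarDec S H) :
    ∀ e ∈ H.edgeSet, ∀ x ∈ e, x ∈ S := by
  induction h with
  | base v c hc =>
      intro e he x hx
      rw [edgeSet_fromWalkEdges] at he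
      exact mem_of_mem_edge c he hx
  | ear S H u w p hED hu hw hne hp hint hnew IH =>
      intro e he x hx
      rw [edgeSet_sup] at he
      rcases he with he | he
      · exact Or.inl (IH e he x hx)
      · rw [edgeSet_fromWalkEdges] at he
        exact Or.inr (mem_of_mem_edge p he hx)

lemma EarDec.reach {S : Set V} {H : SimpleGraph V} (h : EarDec S H) :
    ∀ u ∈ S, ∀ v ∈ S, H.Reachable u v := by
  classical
  induction h with
  | base v c hc =>
      intro a ha b hb
      simp only [Set.mem_setOf_eq] at ha hb
      have hsub : ∀ {x : V} (hx : x ∈ c.support),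
          ((c.takeUntil x hx).transfer (fromEdgeSet {e | e ∈ c.edges})
            (by intro e he
                rw [edgeSet_fromWalkEdges]
                exact c.edges_takeUntil_subset hx he)) = _ := fun _ => rfl
      have r1 := (c.takeUntil a ha).transfer (fromEdgeSet {e | e ∈ c.edges})
        (by intro e he
            rw [edgeSet_fromWalkEdges]
            exact c.edges_takeUntil_subset ha he)
      have r2 := (c.takeUntil b hb).transfer (fromEdgeSet {e | e ∈ c.edges})
        (by intro e he
            rw [edgeSet_fromWalkEdges]
            exact c.edges_takeUntil_subset hb he)
      exact (Walk.reachable r1).symm.trans (Walk.reachable r2)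
  | ear S H u w p hED hu hw hne hp hint hnew IH =>
      intro a ha b hb
      have key : ∀ x ∈ S ∪ {x | x ∈ p.support},
          (H ⊔ fromEdgeSet {e | e ∈ p.edges}).Reachable x u := by
        intro x hx
        rcases hx with hx | hx
        · exact (IH x hx u hu).mono le_sup_left
        · simp only [Set.mem_setOf_eq] at hx
          have r := (p.takeUntil x hx).transfer (H ⊔ fromEdgeSet {e | e ∈ p.edges})
            (by intro e he
                rw [edgeSet_sup, edgeSet_fromWalkEdges]
                exact Or.inr (p.edges_takeUntil_subset hx he))
          exact (Walk.reachable r).symm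
      exact (key a ha).trans (key b hb).symm

lemma EarDec.exists_pair {S : Set V} {H : SimpleGraph V} (h : EarDec S H) :
    ∃ a b : V, a ∈ S ∧ b ∈ S ∧ a ≠ b := by
  induction h with
  | base v c hc =>
      have h3 := hc.three_le_length
      have hnodup := hc.support_nodup
      have hlen : c.support.tail.length = c.length := by
        have := c.length_support
        rw [List.length_tail]
        omega
      obtain ⟨x, y, tl, htl⟩ : ∃ x y tl, c.support.tail = x :: y :: tl := by
        rcases h1 : c.support.tail with _ | ⟨x, tl⟩
        · rw [h1] at hlen; simp at hlen; omega
        · rcases tl with _ | ⟨y, tl'⟩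
          · rw [h1] at hlen; simp at hlen; omega
          · exact ⟨x, y, tl', rfl⟩

      rw [htl] at hnodup
      refine ⟨x, y, ?_, ?_, ?_⟩
      · exact List.mem_of_mem_tail (by rw [htl]; simp)
      · exact List.mem_of_mem_tail (by rw [htl]; simp)
      · intro hxy
        rw [List.nodup_cons] at hnodup
        exact hnodup.1 (by rw [hxy]; simp)
  | ear S H u w p hED hu hw hne hp hint hnew IH =>
      obtain ⟨a, b, ha, hb, hab⟩ := IH
      exact ⟨a, b, Or.inl ha, Or.inl hb, hab⟩

/-- In an ear-decomposable graph, no edge is a bridge. -/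
lemma EarDec.reach_del_edge {S : Set V} {H : SimpleGraph V} (h : EarDec S H) :
    ∀ e ∈ H.edgeSet, ∀ a b : V, e = s(a, b) →
      (H.deleteEdges {e}).Reachable a b := by
  induction h with
  | base v c hc =>
      intro e he a b heab
      rw [edgeSet_fromWalkEdges] at he
      obtain ⟨a', b', heab', r1, r2, h1, h2, h3, h4⟩ :=
        split_at_edge c hc.edges_nodup he
      set H₀ := fromEdgeSet {e_ | e_ ∈ c.edges} with hH₀
      have hedge : ∀ {x y : V} (r : (⊤ : SimpleGraph V).Walk x y),
          (∀ f ∈ r.edges, f ∈ c.edges) → e ∉ r.edges →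
          (H₀.deleteEdges {e}).Reachable x y := by
        intro x y r hr hre
        refine Walk.reachable (r.transfer _ ?_)
        intro f hf
        rw [edgeSet_deleteEdges, edgeSet_fromWalkEdges]
        exact ⟨hr f hf, by simp; rintro rfl; exact hre hf⟩
      have hr1 := hedge r1 h1 h3
      have hr2 := hedge r2 h2 h4
      have hab' : (H₀.deleteEdges {e}).Reachable a' b' := hr1.symm.trans hr2.symm
      rw [heab'] at heab
      rcases Sym2.eq_iff.mp heab with ⟨rfl, rfl⟩ | ⟨rfl, rfl⟩
      · exact hab'
      · exact hab'.symm
  | ear S H u w p hED hu hw hne hp hint hnew IH =>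
      intro e he a b heab
      set H' := H ⊔ fromEdgeSet {e_ | e_ ∈ p.edges} with hH'
      rw [edgeSet_sup] at he
      rcases he with he | he
      · have := IH e he a b heab
        refine this.mono ?_
        intro x y hxy
        rw [deleteEdges_adj] at hxy ⊢
        have hle : H ≤ H ⊔ fromEdgeSet {e_ | e_ ∈ p.edges} := le_sup_left
        exact ⟨hle hxy.1, hxy.2⟩
      · rw [edgeSet_fromWalkEdges] at he
        have hEe : e ∉ H.edgeSet := hnew e he
        obtain ⟨a', b', heab', r1, r2, h1, h2, h3, h4⟩ :=
          split_at_edge p hp.edges_nodup he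
        have hedge : ∀ {x y : V} (r : (⊤ : SimpleGraph V).Walk x y),
            (∀ f ∈ r.edges, f ∈ p.edges) → e ∉ r.edges →
            (H'.deleteEdges {e}).Reachable x y := by
          intro x y r hr hre
          refine Walk.reachable (r.transfer _ ?_)
          intro f hf
          rw [edgeSet_deleteEdges, edgeSet_sup, edgeSet_fromWalkEdges]
          exact ⟨Or.inr (hr f hf), by simp; rintro rfl; exact hre hf⟩
        have hmid : (H'.deleteEdges {e}).Reachable u w := by
          refine (hED.reach u hu w hw).mono ?_
          intro x y hxy
          rw [deleteEdges_adj]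
          have hle : H ≤ H' := le_sup_left
          refine ⟨hle hxy, ?_⟩
          simp only [Set.mem_singleton_iff]
          rintro rfl
          exact hEe (H.mem_edgeSet.mpr hxy)
        have hr1 := hedge r1 h1 h3
        have hr2 := hedge r2 h2 h4
        have hab' : (H'.deleteEdges {e}).Reachable a' b' :=
          (hr1.symm.trans hmid).trans hr2.symm
        rw [heab'] at heab
        rcases Sym2.eq_iff.mp heab with ⟨rfl, rfl⟩ | ⟨rfl, rfl⟩
        · exact hab'
        · exact hab'.symm

lemma SepHyp.edge_sep {S : Set V} {H : SimpleGraph V} {Γ : Sym2 V → ℕ}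
    (hsep : SepHyp S H Γ) (hED : EarDec S H) {a b : V} (hab : H.Adj a b) :
    ¬ (H.deleteEdges (cls H Γ (Γ s(a, b)))).Reachable a b := by
  have hmem : s(a, b) ∈ H.edgeSet := H.mem_edgeSet.mpr hab
  have haS : a ∈ S := hED.verts_mem _ hmem a (by simp)
  have hbS : b ∈ S := hED.verts_mem _ hmem b (by simp)
  obtain ⟨i, hi⟩ := hsep a haS b hbS hab.ne
  by_cases hΓ : Γ s(a, b) = i
  · rwa [hΓ]
  · exfalso
    apply hi
    apply Adj.reachable
    rw [deleteEdges_adj]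
    exact ⟨hab, fun hc => hΓ hc.2⟩

/-- Every used color class has at least two edges. -/
lemma fiber_two_le {S : Set V} {H : SimpleGraph V} {Γ : Sym2 V → ℕ} [Fintype V]
    (hED : EarDec S H) (hsep : SepHyp S H Γ) :
    ∀ c ∈ Γ '' H.edgeSet, 2 ≤ (cls H Γ c).ncard := by
  intro c hc
  obtain ⟨e, he, rfl⟩ := hc
  have hfin : (cls H Γ (Γ e)).Finite := Set.toFinite _
  have hne : (cls H Γ (Γ e)).Nonempty := ⟨e, he, rfl⟩
  rcases Nat.lt_or_ge (cls H Γ (Γ e)).ncard 2 with hlt | hge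
  · exfalso
    have h1 : (cls H Γ (Γ e)).ncard = 1 := by
      have := Set.ncard_pos hfin |>.mpr hne
      omega
    obtain ⟨e₀, he₀⟩ := Set.ncard_eq_one.mp h1
    have hee : e = e₀ := by
      have : e ∈ (cls H Γ (Γ e)) := ⟨he, rfl⟩
      rwa [he₀, Set.mem_singleton_iff] at this
    subst hee
    induction e with
    | _ a b =>
      have hab : H.Adj a b := H.mem_edgeSet.mp he
      have hnr := hsep.edge_sep hED hab
      apply hnr
      have := hED.reach_del_edge s(a, b) he a b rfl
      refine this.mono ?_
      intro x y hxy
      rw [deleteEdges_adj] at hxy ⊢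
      exact ⟨hxy.1, by rw [he₀]; exact hxy.2⟩
  · exact hge

/-- Disjoint-fibers counting: if each color in `C` has ≥ 2 edges of `E`, then `2|C| ≤ |E|`. -/
lemma two_mul_ncard_le [Fintype V] (E : Set (Sym2 V)) (C : Set ℕ) (Γ : Sym2 V → ℕ)
    (h2 : ∀ c ∈ C, 2 ≤ {e | e ∈ E ∧ Γ e = c}.ncard) :
    2 * C.ncard ≤ E.ncard := by
  classical
  have hEfin : E.Finite := Set.toFinite _
  have hCsub : C ⊆ Γ '' E := by
    intro c hcC
    have := h2 c hcC
    have hne : {e | e ∈ E ∧ Γ e = c}.Nonempty := by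
      rcases Set.eq_empty_or_nonempty {e | e ∈ E ∧ Γ e = c} with hemp | hne
      · rw [hemp] at this; simp at this
      · exact hne
    obtain ⟨e, heE, heΓ⟩ := hne
    exact ⟨e, heE, heΓ⟩
  have hCfin : C.Finite := (hEfin.image Γ).subset hCsub
  set F : Finset (Sym2 V) := hEfin.toFinset with hF
  set CF : Finset ℕ := hCfin.toFinset with hCF
  set F' : Finset (Sym2 V) := F.filter (fun e => Γ e ∈ CF) with hF'
  have hcardF' : F'.card = ∑ c ∈ CF, (F'.filter (fun e => Γ e = c)).card := by
    apply Finset.card_eq_sum_card_fiberwise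
    intro x hx
    rw [hF'] at hx
    exact (Finset.mem_filter.mp hx).2
  have hfib : ∀ c ∈ CF, (F'.filter (fun e => Γ e = c)).card =
      {e | e ∈ E ∧ Γ e = c}.ncard := by
    intro c hcCF
    have : {e | e ∈ E ∧ Γ e = c} = ↑(F'.filter (fun e => Γ e = c)) := by
      ext e
      simp only [Set.mem_setOf_eq, Finset.coe_filter, Finset.mem_filter, hF', hF,
        Set.Finite.mem_toFinset]
      constructor
      · rintro ⟨h1, h2⟩
        exact ⟨⟨h1, by rw [h2]; exact hcCF⟩, h2⟩
      · rintro ⟨⟨h1, _⟩, h3⟩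
        exact ⟨h1, h3⟩
    rw [this, Set.ncard_coe_finset]
  have hsum : 2 * CF.card ≤ ∑ c ∈ CF, (F'.filter (fun e => Γ e = c)).card := by
    have := Finset.card_nsmul_le_sum CF (fun c => (F'.filter (fun e => Γ e = c)).card) 2
      (fun c hc => by
        show 2 ≤ (Finset.filter (fun e => Γ e = c) F').card
        rw [hfib c hc]
        exact h2 c (by rwa [hCF, Set.Finite.mem_toFinset] at hc))
    simpa [smul_eq_mul, mul_comm] using this
  have hFE : F.card = E.ncard := by
    rw [hF, Set.ncard_eq_toFinset_card E hEfin]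
  have hCC : CF.card = C.ncard := by
    rw [hCF, Set.ncard_eq_toFinset_card C hCfin]
  have hF'F : F'.card ≤ F.card := Finset.card_le_card (Finset.filter_subset _ _)
  omega

lemma support_ncard_eq {v : V} (c : (⊤ : SimpleGraph V).Walk v v) (hc : c.IsCycle) :
    ({x | x ∈ c.support} : Set V).ncard = c.length := by
  classical
  have hvtail : v ∈ c.support.tail := by
    cases c with
    | nil => exact absurd rfl hc.ne_nil
    | cons h q => simpa using q.end_mem_support
  have hset : ({x | x ∈ c.support} : Set V) = ↑c.support.tail.toFinset := by
    ext x
    simp only [Set.mem_setOf_eq, Finset.coe_sort_coe, List.coe_toFinset]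
    rw [c.support_eq_cons]
    simp only [List.mem_cons, List.tail_cons]
    constructor
    · rintro (rfl | hx)
      · exact hvtail
      · exact hx
    · exact fun hx => Or.inr hx
  rw [hset, Set.ncard_coe_finset, List.toFinset_card_of_nodup hc.support_nodup,
    List.length_tail, c.length_support]
  omega

lemma edges_ncard_eq {u w : V} (p : (⊤ : SimpleGraph V).Walk u w) (hnd : p.edges.Nodup) :
    ({e | e ∈ p.edges} : Set (Sym2 V)).ncard = p.length := by
  classical
  have hset : ({e | e ∈ p.edges} : Set (Sym2 V)) = ↑p.edges.toFinset := by
    ext e; simp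
  rw [hset, Set.ncard_coe_finset, List.toFinset_card_of_nodup hnd, p.length_edges]

lemma main_bound [Fintype V] {S : Set V} {H : SimpleGraph V} (hED : EarDec S H) :
    ∀ Γ : Sym2 V → ℕ, SepHyp S H Γ → 2 * (Γ '' H.edgeSet).ncard ≤ S.ncard := by
  induction hED with
  | base v c hc =>
      intro Γ hsep
      have hED' : EarDec {x | x ∈ c.support} (fromEdgeSet {e | e ∈ c.edges}) :=
        EarDec.base v c hc
      set HB := fromEdgeSet {e | e ∈ c.edges} with hHB
      have hE : HB.edgeSet = {e | e ∈ c.edges} := edgeSet_fromWalkEdges c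
      have h2 : ∀ c' ∈ Γ '' HB.edgeSet, 2 ≤ {e | e ∈ HB.edgeSet ∧ Γ e = c'}.ncard :=
        fun c' hc' => fiber_two_le hED' hsep c' hc'
      have hcount := two_mul_ncard_le HB.edgeSet (Γ '' HB.edgeSet) Γ h2
      have hEcard : HB.edgeSet.ncard = c.length := by
        rw [hE]; exact edges_ncard_eq c hc.edges_nodup
      have hScard := support_ncard_eq c hc
      omega
  | ear S H u w p hED hu hw hne hp hint hnew IH =>
      intro Γ hsep'
      classical
      set P : Set (Sym2 V) := {e | e ∈ p.edges} with hP
      set H' := H ⊔ fromEdgeSet P with hH'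
      set S' := S ∪ {x | x ∈ p.support} with hS'
      have hED' : EarDec S' H' := EarDec.ear S H u w p hED hu hw hne hp hint hnew
      have hle : H ≤ H' := le_sup_left
      have hE' : H'.edgeSet = H.edgeSet ∪ P := by
        rw [hH', edgeSet_sup, edgeSet_fromWalkEdges]
      have hsepH : SepHyp S H Γ := hsep'.mono Set.subset_union_left hle
      have hIH := IH Γ hsepH
      set A := (Γ '' H'.edgeSet) \ (Γ '' H.edgeSet) with hA
      have hsubimg : Γ '' H.edgeSet ⊆ Γ '' H'.edgeSet := by
        apply Set.image_mono
        rw [hE']; exact Set.subset_union_left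
      have hkL : (Γ '' H'.edgeSet).ncard = (Γ '' H.edgeSet).ncard + A.ncard := by
        rw [hA, ← Set.ncard_union_eq Set.disjoint_sdiff_right (Set.toFinite _) (Set.toFinite _),
          Set.union_diff_cancel hsubimg]
      have hlost : ∀ c ∈ A, {e | e ∈ P ∧ Γ e = c} = cls H' Γ c := by
        intro c hcA
        ext e
        constructor
        · rintro ⟨heP, hΓ⟩
          exact ⟨by rw [hE']; exact Or.inr heP, hΓ⟩
        · rintro ⟨heE', hΓ⟩
          rw [hE'] at heE'
          rcases heE' with heE | heP
          · exact absurd ⟨e, heE, hΓ⟩ hcA.2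
          · exact ⟨heP, hΓ⟩
      have hlost2 : ∀ c ∈ A, 2 ≤ {e | e ∈ P ∧ Γ e = c}.ncard := by
        intro c hcA
        rw [hlost c hcA]
        exact fiber_two_le hED' hsep' c hcA.1
      have hPcard : P.ncard = p.length := edges_ncard_eq p hp.edges_nodup
      have hlen1 : 1 ≤ p.length := by
        cases p with
        | nil => exact absurd rfl hne
        | cons h q => simp
      have hstrict : 2 * A.ncard + 1 ≤ p.length := by
        by_cases hall : ∀ e ∈ p.edges, Γ e ∈ A
        · exfalso
          obtain ⟨i, hi⟩ := hsep' u (Or.inl hu) w (Or.inl hw) hne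
          apply hi
          by_cases hiA : i ∈ A
          · refine (hED.reach u hu w hw).mono ?_
            intro x y hxy
            rw [deleteEdges_adj]
            refine ⟨hle hxy, ?_⟩
            rintro ⟨hmem, hΓ⟩
            exact hiA.2 ⟨s(x, y), H.mem_edgeSet.mpr hxy, hΓ⟩
          · refine Walk.reachable (p.transfer (H'.deleteEdges (cls H' Γ i)) ?_)
            intro e he
            rw [edgeSet_deleteEdges, hE']
            refine ⟨Or.inr he, ?_⟩
            rintro ⟨hmem, hΓ⟩
            exact hiA (hΓ ▸ hall e he)
        · push_neg at hall
          obtain ⟨e₀, he₀, hΓe₀⟩ := hall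
          have hfibs : ∀ c ∈ A, 2 ≤ {e | e ∈ P \ {e₀} ∧ Γ e = c}.ncard := by
            intro c hcA
            have heq : {e | e ∈ P \ {e₀} ∧ Γ e = c} = {e | e ∈ P ∧ Γ e = c} := by
              ext e
              constructor
              · rintro ⟨⟨h1, _⟩, h3⟩; exact ⟨h1, h3⟩
              · rintro ⟨h1, h3⟩
                refine ⟨⟨h1, ?_⟩, h3⟩
                rintro rfl
                exact hΓe₀ (h3 ▸ hcA)
            rw [heq]
            exact hlost2 c hcA
          have hcnt := two_mul_ncard_le (P \ {e₀}) A Γ hfibs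
          have hd : (P \ {e₀}).ncard = P.ncard - 1 :=
            Set.ncard_diff_singleton_of_mem (show e₀ ∈ P from he₀)
          omega
      -- cardinality of S'
      have hSS' : S'.ncard + 1 = S.ncard + p.length := by
        have hTdef : ({x | x ∈ p.support} : Set V) \ S =
            ({x | x ∈ p.support} : Set V) \ {u, w} := by
          ext x
          simp only [Set.mem_diff, Set.mem_setOf_eq, Set.mem_insert_iff,
            Set.mem_singleton_iff]
          constructor
          · rintro ⟨hx, hnS⟩
            exact ⟨hx, fun hc => by
              rcases hc with rfl | rfl
              · exact hnS hu
              · exact hnS hw⟩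
          · rintro ⟨hx, hne2⟩
            push_neg at hne2
            exact ⟨hx, hint x hx hne2.1 hne2.2⟩
        have hunion : S' = S ∪ (({x | x ∈ p.support} : Set V) \ S) := by
          rw [hS', Set.union_diff_self]
        have hcard : S'.ncard = S.ncard + (({x | x ∈ p.support} : Set V) \ S).ncard := by
          rw [hunion, Set.ncard_union_eq Set.disjoint_sdiff_right (Set.toFinite _)
            (Set.toFinite _)]
        have hTcard : (({x | x ∈ p.support} : Set V) \ {u, w}).ncard + 1 = p.length := by
          have hfin : ({x | x ∈ p.support} : Set V) \ {u, w} =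
              ↑(p.support.toFinset \ {u, w}) := by
            ext x; simp
          rw [hfin, Set.ncard_coe_finset]
          have hsubF : ({u, w} : Finset V) ⊆ p.support.toFinset := by
            intro x hx
            simp only [Finset.mem_insert, Finset.mem_singleton] at hx
            rcases hx with rfl | rfl
            · simp
            · simp
          rw [Finset.card_sdiff_of_subset hsubF]
          have hcuw : ({u, w} : Finset V).card = 2 := by
            rw [Finset.card_insert_of_notMem (by simpa using hne), Finset.card_singleton]
          have hsupc : p.support.toFinset.card = p.length + 1 := by
            rw [List.toFinset_card_of_nodup hp.support_nodup, p.length_support]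
          omega
        rw [hcard, hTdef]
        omega
      rw [hkL]
      omega

/-! ### Whitney: every 2-connected graph has an open ear decomposition -/

lemma fromEdgeSet_le' {G : SimpleGraph V} {s : Set (Sym2 V)} (h : s ⊆ G.edgeSet) :
    fromEdgeSet s ≤ G := by
  intro a b hab
  rw [fromEdgeSet_adj] at hab
  exact G.mem_edgeSet.mp (h hab.1)

section Whitney

variable [Fintype V] {G : SimpleGraph V}

lemma exists_third (h3 : 3 ≤ Fintype.card V) (a b : V) : ∃ x : V, x ≠ a ∧ x ≠ b := by
  classical
  by_contra h
  push_neg at h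
  have hsub : (Finset.univ : Finset V) ⊆ {a, b} := by
    intro x _
    by_cases hx : x = a
    · simp [hx]
    · simp [h x hx]
  have hcard := Finset.card_le_card hsub
  have h2 : ({a, b} : Finset V).card ≤ 2 := by
    apply le_trans (Finset.card_insert_le a {b})
    simp
  rw [Finset.card_univ] at hcard
  omega

lemma avoid_walk (h2conn : ∀ v : V, (G.induce {v}ᶜ).Connected) (x a b : V)
    (ha : a ≠ x) (hb : b ≠ x) : ∃ p : G.Walk a b, ∀ y ∈ p.support, y ≠ x := by
  have hr := (h2conn x).preconnected ⟨a, by simp [ha]⟩ ⟨b, by simp [hb]⟩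
  obtain ⟨w⟩ := hr
  obtain ⟨p, hp⟩ := walk_of_induce w
  exact ⟨p, fun y hy => by simpa using hp y hy⟩

lemma reachG (h3 : 3 ≤ Fintype.card V) (h2conn : ∀ v : V, (G.induce {v}ᶜ).Connected) :
    ∀ a b : V, G.Reachable a b := by
  intro a b
  by_cases hab : a = b
  · subst hab; rfl
  · obtain ⟨x, hxa, hxb⟩ := exists_third h3 a b
    obtain ⟨p, _⟩ := avoid_walk h2conn x a b (Ne.symm hxa) (Ne.symm hxb)
    exact ⟨p⟩

lemma exists_edge (h3 : 3 ≤ Fintype.card V)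
    (h2conn : ∀ v : V, (G.induce {v}ᶜ).Connected) : ∃ a b : V, G.Adj a b := by
  obtain ⟨a, b, hab⟩ := Fintype.exists_pair_of_one_lt_card (α := V) (by omega)
  obtain ⟨w⟩ := reachG h3 h2conn a b
  cases w with
  | nil => exact absurd rfl hab
  | cons h q => exact ⟨_, _, h⟩

lemma exists_base (h3 : 3 ≤ Fintype.card V)
    (h2conn : ∀ v : V, (G.induce {v}ᶜ).Connected) :
    ∃ (S : Set V) (H : SimpleGraph V), EarDec S H ∧ H ≤ G := by
  classical
  obtain ⟨a, b, hab⟩ := exists_edge h3 h2conn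
  obtain ⟨x, hxa, hxb⟩ := exists_third h3 a b
  obtain ⟨w1, hw1⟩ := avoid_walk h2conn b a x hab.ne hxb
  obtain ⟨w2, hw2⟩ := avoid_walk h2conn a x b hxa (Ne.symm hab.ne)
  set q := w1.append w2 with hq
  have hqe : s(a, b) ∉ q.edges := by
    intro hmem
    rw [hq, Walk.edges_append, List.mem_append] at hmem
    rcases hmem with h1 | h2
    · exact hw1 b (mem_of_mem_edge w1 h1 (by simp)) rfl
    · exact hw2 a (mem_of_mem_edge w2 h2 (by simp)) rfl
  set p0 := q.bypass with hp0def
  have hp0 : p0.IsPath := q.bypass_isPath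
  have hep0 : s(a, b) ∉ p0.edges := fun h => hqe (q.edges_bypass_subset h)
  have hep0' : s(b, a) ∉ p0.edges := by rwa [Sym2.eq_swap]
  set c0 : G.Walk b b := Walk.cons hab.symm p0 with hc0def
  have hc0 : c0.IsCycle := Path.cons_isCycle ⟨p0, hp0⟩ hab.symm hep0'
  have hednd : ∀ e ∈ c0.edges, e ∈ (⊤ : SimpleGraph V).edgeSet := by
    intro e he
    rw [edgeSet_top]
    exact G.not_isDiag_of_mem_edgeSet (c0.edges_subset_edgeSet he)
  set c := c0.transfer ⊤ hednd with hcdef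
  have hc : c.IsCycle := by
    rw [Walk.isCycle_def, Walk.isTrail_def, Walk.support_transfer, Walk.edges_transfer]
    rw [Walk.isCycle_def, Walk.isTrail_def] at hc0
    refine ⟨hc0.1, ?_, hc0.2.2⟩
    intro hnil
    apply hc0.2.1
    have hlen : c.length = c0.length := by
      rw [← Walk.length_edges, ← Walk.length_edges, Walk.edges_transfer]
    have hzero : c.length = 0 := by rw [hnil]; rfl
    cases hc0eq : c0 with
    | nil => rfl
    | cons h qq =>
        exfalso
        rw [hc0eq] at hlen
        rw [Walk.length_cons] at hlen
        omega
  refine ⟨_, _, EarDec.base b c hc, ?_⟩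
  apply fromEdgeSet_le'
  intro e he
  simp only [Set.mem_setOf_eq] at he
  rw [hcdef, Walk.edges_transfer] at he
  exact c0.edges_subset_edgeSet he

lemma grow_vertex (h2conn : ∀ v : V, (G.induce {v}ᶜ).Connected)
    {S : Set V} {H : SimpleGraph V} (hED : EarDec S H) (hle : H ≤ G) {x y : V}
    (hx : x ∈ S) (hy : y ∉ S) (hadj : G.Adj x y) :
    ∃ S' H', EarDec S' H' ∧ H' ≤ G ∧ S ⊆ S' ∧ y ∈ S' ∧ H ≤ H' := by
  classical
  obtain ⟨a0, b0, ha0, hb0, hab0⟩ := hED.exists_pair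
  have htEx : ∃ t, t ∈ S ∧ t ≠ x := by
    by_cases h : a0 = x
    · exact ⟨b0, hb0, fun hc => hab0 (by rw [h, hc])⟩
    · exact ⟨a0, ha0, h⟩
  obtain ⟨t, htS, htx⟩ := htEx
  have hyx : y ≠ x := fun h => hy (h ▸ hx)
  obtain ⟨w0, hw0⟩ := avoid_walk h2conn x y t hyx htx
  obtain ⟨z, hz, q, hqsup, hqed, hqS⟩ := exists_prefix_to_set w0 hy htS
  set q1 := q.bypass with hq1def
  have hq1path : q1.IsPath := q.bypass_isPath
  have hq1sup : ∀ m ∈ q1.support, m ∈ q.support := fun m hm => q.support_bypass_subset hm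
  have hq1x : ∀ m ∈ q1.support, m ≠ x := fun m hm => hw0 m (hqsup m (hq1sup m hm))
  have hq1S : ∀ m ∈ q1.support, m ≠ z → m ∉ S := fun m hm => hqS m (hq1sup m hm)
  have hzx : z ≠ x := hq1x z q1.end_mem_support
  have hq1G : ∀ e ∈ q1.edges, e ∈ (⊤ : SimpleGraph V).edgeSet := by
    intro e he
    rw [edgeSet_top]
    exact G.not_isDiag_of_mem_edgeSet (q1.edges_subset_edgeSet he)
  set q2 := q1.transfer ⊤ hq1G with hq2def
  have hq2sup : q2.support = q1.support := Walk.support_transfer _ _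
  have hq2ed : q2.edges = q1.edges := Walk.edges_transfer _ _
  have hxy : (⊤ : SimpleGraph V).Adj x y := by rw [top_adj]; exact Ne.symm hyx
  set p := Walk.cons hxy q2 with hpdef
  have hppath : p.IsPath := by
    rw [hpdef, Walk.cons_isPath_iff]
    constructor
    · rw [Walk.isPath_def, hq2sup]
      exact hq1path.support_nodup
    · rw [hq2sup]
      exact fun hc => hq1x x hc rfl
  have hpsup : p.support = x :: q1.support := by
    rw [hpdef, Walk.support_cons, hq2sup]
  have hpedges : p.edges = s(x, y) :: q1.edges := by
    rw [hpdef, Walk.edges_cons, hq2ed]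
  have hint : ∀ m ∈ p.support, m ≠ x → m ≠ z → m ∉ S := by
    intro m hm hmx hmz
    rw [hpsup] at hm
    rcases List.mem_cons.mp hm with rfl | hm'
    · exact absurd rfl hmx
    · exact hq1S m hm' hmz
  have hnew : ∀ e ∈ p.edges, e ∉ H.edgeSet := by
    intro e he hmem
    rw [hpedges] at he
    rcases List.mem_cons.mp he with rfl | he'
    · exact hy (hED.verts_mem _ hmem y (by simp))
    · induction e with
      | _ a' b' =>
        have ha' : a' ∈ q1.support := q1.fst_mem_support_of_mem_edges he'
        have hb' : b' ∈ q1.support := q1.snd_mem_support_of_mem_edges he'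
        have hne' : a' ≠ b' := (q1.adj_of_mem_edges he').ne
        by_cases haz : a' = z
        · have hbz : b' ≠ z := fun hc => hne' (by rw [haz, hc])
          exact hq1S b' hb' hbz (hED.verts_mem _ hmem b' (by simp))
        · exact hq1S a' ha' haz (hED.verts_mem _ hmem a' (by simp))
  refine ⟨S ∪ {m | m ∈ p.support}, H ⊔ fromEdgeSet {e | e ∈ p.edges},
    EarDec.ear S H x z p hED hx hz (Ne.symm hzx) hppath hint hnew, ?_,
    Set.subset_union_left, ?_, le_sup_left⟩
  · apply sup_le hle
    apply fromEdgeSet_le'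
    intro e he
    simp only [Set.mem_setOf_eq] at he
    rw [hpedges] at he
    rcases List.mem_cons.mp he with rfl | he'
    · exact G.mem_edgeSet.mpr hadj
    · exact q1.edges_subset_edgeSet he'
  · right
    rw [Set.mem_setOf_eq, hpsup]
    exact List.mem_cons.mpr (Or.inr q1.start_mem_support)

lemma grow_chord {S : Set V} {H : SimpleGraph V} (hED : EarDec S H) (hle : H ≤ G)
    {x y : V} (hx : x ∈ S) (hy : y ∈ S) (hadj : G.Adj x y)
    (hne : s(x, y) ∉ H.edgeSet) :
    ∃ S' H', EarDec S' H' ∧ H' ≤ G ∧ S ⊆ S' ∧ H ≤ H' ∧ s(x, y) ∈ H'.edgeSet := by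
  classical
  have hxy : (⊤ : SimpleGraph V).Adj x y := by rw [top_adj]; exact hadj.ne
  set p : (⊤ : SimpleGraph V).Walk x y := Walk.cons hxy Walk.nil with hpdef
  have hppath : p.IsPath := by
    rw [hpdef, Walk.cons_isPath_iff]
    constructor
    · exact Walk.IsPath.nil
    · simp [hadj.ne]
  have hpsup : p.support = [x, y] := by rw [hpdef]; simp
  have hpedges : p.edges = [s(x, y)] := by rw [hpdef]; simp
  have hint : ∀ m ∈ p.support, m ≠ x → m ≠ y → m ∉ S := by
    intro m hm hmx hmy
    rw [hpsup] at hm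
    simp at hm
    rcases hm with rfl | rfl
    · exact absurd rfl hmx
    · exact absurd rfl hmy
  have hnew : ∀ e ∈ p.edges, e ∉ H.edgeSet := by
    intro e he
    rw [hpedges] at he
    simp at he
    rw [he]
    exact hne
  refine ⟨_, _, EarDec.ear S H x y p hED hx hy hadj.ne hppath hint hnew, ?_,
    Set.subset_union_left, le_sup_left, ?_⟩
  · apply sup_le hle
    apply fromEdgeSet_le'
    intro e he
    simp only [Set.mem_setOf_eq] at he
    rw [hpedges] at he
    simp at he
    rw [he]
    exact G.mem_edgeSet.mpr hadj
  · rw [edgeSet_sup, edgeSet_fromWalkEdges]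
    right
    rw [Set.mem_setOf_eq, hpedges]
    simp

lemma earDec_univ (h3 : 3 ≤ Fintype.card V)
    (h2conn : ∀ v : V, (G.induce {v}ᶜ).Connected) : EarDec Set.univ G := by
  classical
  set Ω : Set ℕ :=
    {m | ∃ (S : Set V) (H : SimpleGraph V),
      EarDec S H ∧ H ≤ G ∧ S.ncard + H.edgeSet.ncard = m} with hΩ
  have hbdd : BddAbove Ω := by
    refine ⟨Fintype.card V + Fintype.card (Sym2 V), ?_⟩
    rintro m ⟨S, H, _, _, rfl⟩
    have h1 : S.ncard ≤ Fintype.card V := by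
      have := Set.ncard_le_ncard (Set.subset_univ S) (Set.toFinite _)
      rwa [Set.ncard_univ, Nat.card_eq_fintype_card] at this
    have h2 : H.edgeSet.ncard ≤ Fintype.card (Sym2 V) := by
      have := Set.ncard_le_ncard (Set.subset_univ H.edgeSet) (Set.toFinite _)
      rwa [Set.ncard_univ, Nat.card_eq_fintype_card] at this
    omega
  have hneΩ : Ω.Nonempty := by
    obtain ⟨S, H, hED, hle⟩ := exists_base h3 h2conn
    exact ⟨_, S, H, hED, hle, rfl⟩
  obtain ⟨S, H, hED, hle, hM⟩ := Nat.sSup_mem hneΩ hbdd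
  have hmax : ∀ (S' : Set V) (H' : SimpleGraph V), EarDec S' H' → H' ≤ G →
      S'.ncard + H'.edgeSet.ncard ≤ sSup Ω :=
    fun S' H' h1 h2 => le_csSup hbdd ⟨S', H', h1, h2, rfl⟩
  have hSuniv : S = Set.univ := by
    by_contra hS
    obtain ⟨y, hy⟩ := (Set.ne_univ_iff_exists_notMem S).mp hS
    obtain ⟨s0, _, hs0, _, _⟩ := hED.exists_pair
    obtain ⟨wk⟩ := reachG h3 h2conn y s0
    obtain ⟨a, b, hadj, haS, hbS⟩ := exists_crossing_edge wk hy hs0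
    obtain ⟨S', H', hED', hle', hSS', hbS', hHH'⟩ :=
      grow_vertex h2conn hED hle haS hbS hadj
    have hlt : S.ncard < S'.ncard := by
      apply Set.ncard_lt_ncard _ (Set.toFinite _)
      exact ⟨hSS', fun hc => hbS (hc hbS')⟩
    have hed : H.edgeSet.ncard ≤ H'.edgeSet.ncard :=
      Set.ncard_le_ncard (edgeSet_mono hHH') (Set.toFinite _)
    have := hmax S' H' hED' hle'
    omega
  have hHG : H = G := by
    have hEsub : G.edgeSet ⊆ H.edgeSet := by
      intro e he
      by_contra hne
      induction e with
      | _ a b =>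
        have hadj : G.Adj a b := G.mem_edgeSet.mp he
        obtain ⟨S', H', hED', hle', hSS', hHH', hmem'⟩ :=
          grow_chord hED hle (by rw [hSuniv]; trivial) (by rw [hSuniv]; trivial) hadj hne
        have hlt : H.edgeSet.ncard < H'.edgeSet.ncard := by
          apply Set.ncard_lt_ncard _ (Set.toFinite _)
          exact ⟨edgeSet_mono hHH', fun hc => hne (hc hmem')⟩
        have hS'ge : S.ncard ≤ S'.ncard := Set.ncard_le_ncard hSS' (Set.toFinite _)
        have := hmax S' H' hED' hle'
        omega
    exact le_antisymm hle fun a b hab => H.mem_edgeSet.mp (hEsub (G.mem_edgeSet.mpr hab))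
  rw [← hSuniv, ← hHG]
  exact hED

end Whitney

end MDaux

/-- A 2-connected graph on `n` vertices has `md(G) ≤ ⌊n / 2⌋`. -/
theorem stmt_10 [Fintype V] (G : SimpleGraph V)
    (h3 : 3 ≤ Fintype.card V)
    (h2conn : ∀ v : V, (G.induce {v}ᶜ).Connected) :
    mdNumber G ≤ Fintype.card V / 2 := by
  apply csSup_le'
  rintro k ⟨Γ, hMD, rfl⟩
  have hED := MDaux.earDec_univ h3 h2conn
  have hsep : MDaux.SepHyp Set.univ G Γ := by
    intro u _ v _ hne
    obtain ⟨i, hi⟩ := hMD u v hne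
    obtain ⟨F, hFsub, hFcol, hFnr⟩ := hi
    refine ⟨i, fun hr => hFnr (hr.mono ?_)⟩
    intro a b hab
    rw [deleteEdges_adj] at hab ⊢
    refine ⟨hab.1, fun hmem => hab.2 ⟨hFsub hmem, hFcol _ hmem⟩⟩
  have hb := MDaux.main_bound hED Γ hsep
  rw [Set.ncard_univ, Nat.card_eq_fintype_card] at hb
  rw [Nat.le_div_iff_mul_le (by norm_num)]
  omega
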